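/- Let m be a positive integer, M = 2m, and q = m+1. Then the number 1/(m+1) has exactly countably infinitely many expansions in base q over the alphabet {0,...,2m}: one expansion is (1, 0, 0, ...), and the others are exactly the sequences (0, c_1, c_2, ...) where (c_i) is an expansion of 1. -/

import Mathlib

noncomputable def S14 (q : ℝ) (d : ℕ → ℕ) : ℝ := ∑' i, (d i : ℝ) / q ^ (i+1)

lemma summable14 {q : ℝ} (hq : 1 < q) {M : ℕ} {d : ℕ → ℕ} (hd : ∀ i, d i ≤ M) :
    Summable (fun i => (d i : ℝ) / q ^ (i+1)) := by
  have hq0 : 0 < q := lt_trans one_pos hq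
  have hg : Summable (fun i : ℕ => (M : ℝ) / q ^ (i+1)) := by
    have h := (summable_geometric_of_lt_one (by positivity : (0:ℝ) ≤ 1/q)
      (by rw [div_lt_one hq0]; exact hq)).mul_left ((M:ℝ)/q)
    refine h.congr fun i => ?_
    rw [div_pow, one_pow, pow_succ']
    field_simp
  refine Summable.of_nonneg_of_le (fun i => by positivity) (fun i => ?_) hg
  gcongr
  exact_mod_cast hd i

lemma S14_nonneg {q : ℝ} (hq : 1 < q) (d : ℕ → ℕ) : 0 ≤ S14 q d :=
  tsum_nonneg fun i => by positivity

lemma S14_split {q : ℝ} (hq : 1 < q) {M : ℕ} {d : ℕ → ℕ} (hd : ∀ i, d i ≤ M) :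
    S14 q d = (d 0 : ℝ) / q + S14 q (fun i => d (i+1)) / q := by
  have h := Summable.tsum_eq_zero_add (summable14 hq hd)
  rw [S14, h, pow_one]
  congr 1
  rw [S14, ← tsum_div_const]
  congr 1 with i
  rw [pow_succ]
  ring

lemma S14_zero {q : ℝ} (hq : 1 < q) {M : ℕ} {d : ℕ → ℕ} (hd : ∀ i, d i ≤ M)
    (h : S14 q d = 0) : ∀ i, d i = 0 := by
  intro i
  have h1 : (d i : ℝ) / q ^ (i+1) ≤ 0 := by
    rw [← h]; exact Summable.le_tsum (summable14 hq hd) i (fun j _ => by positivity)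
  have h2 : (0:ℝ) ≤ (d i : ℝ) / q ^ (i+1) := by positivity
  have hq0 : (0:ℝ) < q := lt_trans one_pos hq
  have := le_antisymm h1 h2
  field_simp at this
  simpa using this

lemma S14_const {q : ℝ} (hq : 1 < q) (M : ℕ) :
    S14 q (fun _ => M) = (M : ℝ) / (q - 1) := by
  have hq0 : (0:ℝ) < q := lt_trans one_pos hq
  have h := S14_split hq (d := fun _ => M) (M := M) (fun _ => le_refl _)
  have hne : q - 1 ≠ 0 := by intro h'; nlinarith
  field_simp at h ⊢
  nlinarith [h]

lemma S14_le {q : ℝ} (hq : 1 < q) {M : ℕ} {d : ℕ → ℕ} (hd : ∀ i, d i ≤ M) :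
    S14 q d ≤ (M : ℝ) / (q - 1) := by
  rw [← S14_const hq M]
  refine Summable.tsum_le_tsum (fun i => ?_) (summable14 hq hd) (summable14 hq (fun _ => le_refl M))
  gcongr
  exact_mod_cast hd i

lemma S14_max {q : ℝ} (hq : 1 < q) {M : ℕ} {d : ℕ → ℕ} (hd : ∀ i, d i ≤ M)
    (h : S14 q d = (M : ℝ) / (q - 1)) : ∀ i, d i = M := by
  intro i
  by_contra hne
  have hlt : d i < M := lt_of_le_of_ne (hd i) hne
  have : S14 q d < S14 q (fun _ => M) := by
    refine Summable.tsum_lt_tsum (i := i) (fun j => ?_) ?_ (summable14 hq hd) (summable14 hq (fun _ => le_refl M))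
    · gcongr
      exact_mod_cast hd j
    · gcongr
  rw [S14_const hq M, h] at this
  exact lt_irrefl _ this

lemma hq14 {m : ℕ} (hm : 0 < m) : (1:ℝ) < (m:ℝ) + 1 := by
  have : (1:ℝ) ≤ m := by exact_mod_cast hm
  linarith

lemma tail_le_two {m : ℕ} (hm : 0 < m) {d : ℕ → ℕ} (hd : ∀ i, d i ≤ 2*m) :
    S14 ((m:ℝ)+1) d ≤ 2 := by
  have h := S14_le (hq14 hm) hd
  have hm' : (0:ℝ) < m := by exact_mod_cast hm
  rw [show ((m:ℝ)+1-1) = m by ring] at h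
  calc S14 ((m:ℝ)+1) d ≤ ((2*m : ℕ):ℝ) / m := h
    _ = 2 := by push_cast; field_simp

lemma tail_one {m : ℕ} (hm : 0 < m) {d : ℕ → ℕ} (hd : ∀ i, d i ≤ 2*m)
    (hS : S14 ((m:ℝ)+1) d = 1) :
    (d 0 = m ∧ S14 ((m:ℝ)+1) (fun i => d (i+1)) = 1) ∨
    (d 0 = m+1 ∧ ∀ i, 0 < i → d i = 0) ∨
    (d 0 = m-1 ∧ ∀ i, 0 < i → d i = 2*m) := by
  have hq1 := hq14 hm
  have hq0 : (0:ℝ) < (m:ℝ)+1 := lt_trans one_pos hq1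
  have hqne : ((m:ℝ)+1) ≠ 0 := ne_of_gt hq0
  have hd' : ∀ i, d (i+1) ≤ 2*m := fun i => hd (i+1)
  set t := S14 ((m:ℝ)+1) (fun i => d (i+1)) with ht
  have hsplit := S14_split hq1 hd
  rw [hS] at hsplit
  have heq : (d 0 : ℝ) + t = (m:ℝ) + 1 := by
    field_simp at hsplit
    linarith
  have ht0 : 0 ≤ t := S14_nonneg hq1 _
  have ht2 : t ≤ 2 := tail_le_two hm hd'
  have hub : (d 0 : ℝ) ≤ (m:ℝ) + 1 := by linarith
  have hlb : (m:ℝ) - 1 ≤ (d 0 : ℝ) := by linarith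
  have hubn : d 0 ≤ m + 1 := by exact_mod_cast hub
  have hlbn : m ≤ d 0 + 1 := by
    have : (m:ℝ) ≤ (d 0 : ℝ) + 1 := by linarith
    exact_mod_cast this
  rcases (show d 0 = m ∨ d 0 = m + 1 ∨ d 0 = m - 1 by omega) with h0 | h0 | h0
  · left
    refine ⟨h0, ?_⟩
    rw [h0] at heq
    linarith
  · right; left
    refine ⟨h0, ?_⟩
    have htz : t = 0 := by
      rw [h0] at heq
      push_cast at heq
      linarith
    have := S14_zero hq1 hd' htz
    intro i hi
    have h2 := this (i - 1)
    rwa [Nat.sub_add_cancel hi] at h2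
  · right; right
    refine ⟨h0, ?_⟩
    have hcast : ((d 0 : ℕ):ℝ) = (m:ℝ) - 1 := by
      rw [h0]
      rw [Nat.cast_sub hm]
      norm_num
    have htz : t = 2 := by rw [hcast] at heq; linarith
    have htz' : t = ((2*m : ℕ):ℝ) / (((m:ℝ)+1) - 1) := by
      rw [show ((m:ℝ)+1-1) = m by ring]
      push_cast
      rw [htz]
      field_simp
    have := S14_max hq1 hd' htz'
    intro i hi
    have h2 := this (i - 1)
    rwa [Nat.sub_add_cancel hi] at h2

lemma tail_iter {m : ℕ} (hm : 0 < m) {d : ℕ → ℕ} (hd : ∀ i, d i ≤ 2*m)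
    (hS : S14 ((m:ℝ)+1) d = 1) (k : ℕ) (hk : ∀ i < k, d i = m) :
    S14 ((m:ℝ)+1) (fun i => d (i+k)) = 1 := by
  induction k generalizing d with
  | zero => simpa using hS
  | succ k ih =>
    have h0 : d 0 = m := hk 0 (Nat.succ_pos k)
    rcases tail_one hm hd hS with ⟨_, hS'⟩ | ⟨h, _⟩ | ⟨h, _⟩
    · have hd' : ∀ i, d (i+1) ≤ 2*m := fun i => hd (i+1)
      have hk' : ∀ i < k, d (i+1) = m := fun i hi => hk (i+1) (by omega)
      have := ih hd' hS' hk'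
      have heq : (fun i => d (i + k + 1)) = fun i => d (i + (k+1)) := by
        funext i; congr 1
      rwa [heq] at this
    · omega
    · omega

def p14a (m k : ℕ) : ℕ → ℕ := fun i => if i < k then m else if i = k then m+1 else 0
def p14b (m k : ℕ) : ℕ → ℕ := fun i => if i < k then m else if i = k then m-1 else 2*m

lemma exp_one_subset {m : ℕ} (hm : 0 < m) {d : ℕ → ℕ} (hd : ∀ i, d i ≤ 2*m)
    (hS : S14 ((m:ℝ)+1) d = 1) :
    d = (fun _ => m) ∨ (∃ k, d = p14a m k) ∨ (∃ k, d = p14b m k) := by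
  by_cases hall : ∀ i, d i = m
  · exact Or.inl (funext hall)
  · push_neg at hall
    have hk := Nat.find_spec hall
    set k := Nat.find hall with hkdef
    have hmin : ∀ i < k, d i = m := by
      intro i hi
      by_contra h
      have h2 : k ≤ i := Nat.find_le h
      omega
    have htail := tail_iter hm hd hS k hmin
    have hdt : ∀ i, d (i+k) ≤ 2*m := fun i => hd (i+k)
    rcases tail_one hm hdt htail with ⟨h0, _⟩ | ⟨h0, hrest⟩ | ⟨h0, hrest⟩
    · rw [zero_add] at h0; exact absurd h0 hk
    · right; left
      refine ⟨k, funext fun i => ?_⟩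
      rw [zero_add] at h0
      rcases lt_trichotomy i k with h | h | h
      · simp only [p14a, if_pos h]; exact hmin i h
      · simp only [p14a]
        rw [if_neg (by omega : ¬ i < k), if_pos h, h]
        exact h0
      · have h2 := hrest (i - k) (by omega)
        rw [Nat.sub_add_cancel (le_of_lt h)] at h2
        simp only [p14a]
        rw [if_neg (by omega), if_neg (by omega)]
        exact h2
    · right; right
      refine ⟨k, funext fun i => ?_⟩
      rw [zero_add] at h0
      rcases lt_trichotomy i k with h | h | h
      · simp only [p14b, if_pos h]; exact hmin i h
      · simp only [p14b]
        rw [if_neg (by omega : ¬ i < k), if_pos h, h]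
        exact h0
      · have h2 := hrest (i - k) (by omega)
        rw [Nat.sub_add_cancel (le_of_lt h)] at h2
        simp only [p14b]
        rw [if_neg (by omega), if_neg (by omega)]
        exact h2

lemma p14a_le {m : ℕ} (hm : 0 < m) (k i : ℕ) : p14a m k i ≤ 2*m := by
  simp only [p14a]; split_ifs <;> omega

lemma S14_const_zero {m : ℕ} (hm : 0 < m) : S14 ((m:ℝ)+1) (fun _ => 0) = 0 := by
  have := S14_const (hq14 hm) 0
  simpa using this

lemma S14_p14a {m : ℕ} (hm : 0 < m) (k : ℕ) : S14 ((m:ℝ)+1) (p14a m k) = 1 := by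
  have hq1 := hq14 hm
  have hqne : ((m:ℝ)+1) ≠ 0 := ne_of_gt (lt_trans one_pos hq1)
  induction k with
  | zero =>
    have hsplit := S14_split hq1 (p14a_le hm 0)
    have hshift : (fun i => p14a m 0 (i+1)) = (fun _ => 0) := by
      funext i; simp [p14a]
    rw [hshift, S14_const_zero hm] at hsplit
    have h0 : p14a m 0 0 = m + 1 := by simp [p14a]
    rw [h0] at hsplit
    rw [hsplit]
    push_cast
    field_simp
    ring
  | succ k ih =>
    have hsplit := S14_split hq1 (p14a_le hm (k+1))
    have hshift : (fun i => p14a m (k+1) (i+1)) = p14a m k := by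
      funext i; simp only [p14a]; split_ifs <;> omega
    rw [hshift, ih] at hsplit
    have h0 : p14a m (k+1) 0 = m := by simp [p14a]
    rw [h0] at hsplit
    rw [hsplit]
    field_simp

lemma S14_zc {q : ℝ} (hq : 1 < q) {M : ℕ} {c : ℕ → ℕ} (hc : ∀ i, c i ≤ M) :
    S14 q (fun i => if i = 0 then 0 else c (i-1)) = S14 q c / q := by
  have hd : ∀ i, (fun i => if i = 0 then 0 else c (i-1)) i ≤ M := by
    intro i; dsimp; split_ifs
    · exact Nat.zero_le _
    · exact hc _
  have h := S14_split hq hd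
  have h2 : (fun i => (fun j => if j = 0 then 0 else c (j-1)) (i+1)) = c := by
    funext i; simp
  rw [h2] at h
  simpa using h

lemma S14_e0 {q : ℝ} (hq : 1 < q) : S14 q (fun i => if i = 0 then 1 else 0) = 1/q := by
  have hd : ∀ i, (fun i : ℕ => if i = 0 then 1 else 0) i ≤ 1 := by
    intro i; dsimp; split_ifs <;> omega
  have h := S14_split hq hd
  have h2 : (fun i => (fun j : ℕ => if j = 0 then 1 else 0) (i+1)) = (fun _ => (0:ℕ)) := by
    funext i; simp
  rw [h2] at h
  have h3 : S14 q (fun _ => (0:ℕ)) = 0 := by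
    have := S14_const hq 0
    simpa using this
  rw [h3] at h
  simpa using h

theorem stmt14 (m : ℕ) (hm : 0 < m) (M : ℕ) (hM : M = 2 * m)
    (q : ℝ) (hq : q = (m : ℝ) + 1) :
    {d : ℕ → ℕ | (∀ i, d i ≤ M) ∧ (∑' i : ℕ, (d i : ℝ) / q ^ (i + 1)) = 1 / (m + 1)} =
      insert (fun i => if i = 0 then 1 else 0)
        ((fun c : ℕ → ℕ => fun i => if i = 0 then 0 else c (i - 1)) ''
          {c : ℕ → ℕ | (∀ i, c i ≤ M) ∧ (∑' i : ℕ, (c i : ℝ) / q ^ (i + 1)) = 1}) ∧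
    Cardinal.mk {d : ℕ → ℕ // (∀ i, d i ≤ M) ∧
        (∑' i : ℕ, (d i : ℝ) / q ^ (i + 1)) = 1 / (m + 1)} = Cardinal.aleph0 := by
  subst hM
  subst hq
  have hq1 := hq14 hm
  have hqne : ((m:ℝ)+1) ≠ 0 := ne_of_gt (lt_trans one_pos hq1)
  have key : ∀ d : ℕ → ℕ, (∑' i : ℕ, (d i:ℝ)/((m:ℝ)+1)^(i+1)) = S14 ((m:ℝ)+1) d :=
    fun _ => rfl
  have part1 : {d : ℕ → ℕ | (∀ i, d i ≤ 2*m) ∧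
        (∑' i : ℕ, (d i : ℝ) / ((m:ℝ)+1) ^ (i + 1)) = 1 / ((m:ℝ) + 1)} =
      insert (fun i => if i = 0 then 1 else 0)
        ((fun c : ℕ → ℕ => fun i => if i = 0 then 0 else c (i - 1)) ''
          {c : ℕ → ℕ | (∀ i, c i ≤ 2*m) ∧
            (∑' i : ℕ, (c i : ℝ) / ((m:ℝ)+1) ^ (i + 1)) = 1}) := by
    ext d
    simp only [Set.mem_setOf_eq, Set.mem_insert_iff, Set.mem_image, key]
    constructor
    · rintro ⟨hd, hsum⟩
      have hsplit := S14_split hq1 hd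
      rw [hsum] at hsplit
      set t := S14 ((m:ℝ)+1) (fun i => d (i+1)) with ht
      have heq : (d 0 : ℝ) + t = 1 := by
        field_simp at hsplit
        linarith
      have ht0 : 0 ≤ t := S14_nonneg hq1 _
      have hub : (d 0 : ℝ) ≤ 1 := by linarith
      have hubn : d 0 ≤ 1 := by exact_mod_cast hub
      rcases (show d 0 = 0 ∨ d 0 = 1 by omega) with h0 | h0
      · right
        refine ⟨fun i => d (i+1), ⟨fun i => hd (i+1), ?_⟩, ?_⟩
        · rw [h0] at heq; push_cast at heq; linarith
        · funext i
          cases i with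
          | zero => simpa using h0.symm
          | succ j => simp
      · left
        have htz : t = 0 := by rw [h0] at heq; push_cast at heq; linarith
        have hz := S14_zero hq1 (fun i => hd (i+1)) htz
        funext i
        cases i with
        | zero => simpa using h0
        | succ j => simpa using hz j
    · rintro (rfl | ⟨c, ⟨hc, hcs⟩, rfl⟩)
      · refine ⟨fun i => ?_, ?_⟩
        · dsimp; split_ifs <;> omega
        · exact S14_e0 hq1
      · refine ⟨fun i => ?_, ?_⟩
        · dsimp; split_ifs with h
          · exact Nat.zero_le _
          · exact hc _
        · rw [S14_zc hq1 hc, hcs]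
  refine ⟨part1, ?_⟩
  apply le_antisymm
  · have hE : {c : ℕ → ℕ | (∀ i, c i ≤ 2*m) ∧
        (∑' i : ℕ, (c i : ℝ) / ((m:ℝ)+1) ^ (i + 1)) = 1}.Countable := by
      have hsub : {c : ℕ → ℕ | (∀ i, c i ≤ 2*m) ∧
          (∑' i : ℕ, (c i : ℝ) / ((m:ℝ)+1) ^ (i + 1)) = 1} ⊆
          insert (fun _ => m) (Set.range (p14a m) ∪ Set.range (p14b m)) := by
        rintro c ⟨hc, hcs⟩
        rcases exp_one_subset hm hc hcs with h | ⟨k, h⟩ | ⟨k, h⟩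
        · exact Set.mem_insert_iff.mpr (Or.inl h)
        · exact Set.mem_insert_iff.mpr (Or.inr (Set.mem_union_left _ ⟨k, h.symm⟩))
        · exact Set.mem_insert_iff.mpr (Or.inr (Set.mem_union_right _ ⟨k, h.symm⟩))
      exact Set.Countable.mono hsub
        (((Set.countable_range _).union (Set.countable_range _)).insert _)
    have hcnt : {d : ℕ → ℕ | (∀ i, d i ≤ 2*m) ∧
        (∑' i : ℕ, (d i : ℝ) / ((m:ℝ)+1) ^ (i + 1)) = 1 / ((m:ℝ) + 1)}.Countable := by
      rw [part1]
      exact (hE.image _).insert _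
    rw [Cardinal.mk_le_aleph0_iff]
    exact Set.countable_coe_iff.mpr hcnt
  · rw [Cardinal.aleph0_le_mk_iff]
    have hmem : ∀ k : ℕ, (∀ i, (if i = 0 then 0 else p14a m k (i-1)) ≤ 2*m) ∧
        (∑' i : ℕ, ((if i = 0 then 0 else p14a m k (i-1) : ℕ) : ℝ)/((m:ℝ)+1)^(i+1))
          = 1/((m:ℝ)+1) := by
      intro k
      constructor
      · intro i; split_ifs
        · exact Nat.zero_le _
        · exact p14a_le hm k _
      · rw [key, S14_zc hq1 (p14a_le hm k), S14_p14a hm]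
    refine Infinite.of_injective
      (fun k : ℕ => ⟨fun i => if i = 0 then 0 else p14a m k (i-1), hmem k⟩) ?_
    intro a b hab
    simp only [Subtype.mk.injEq] at hab
    rcases lt_trichotomy a b with h | h | h
    · have hc := congrFun hab (a+1)
      simp only [Nat.succ_ne_zero, if_false, Nat.add_sub_cancel] at hc
      simp [p14a, h] at hc
    · exact h
    · have hc := congrFun hab (b+1)
      simp only [Nat.succ_ne_zero, if_false, Nat.add_sub_cancel] at hc
      simp [p14a, h] at hc
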